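/- Let a : ℕ → ℤ be a sequence with a(1) = 1 that is multiplicative on coprime arguments (a(mn) = a(m)·a(n) whenever gcd(m, n) = 1), and suppose that for every prime p with p ≡ 3 (mod 4) one has a(p) = 0 and the Hecke recurrence a(p)·a(p^k) = a(p^{k+1}) + p·a(p^{k−1}) holds for all k ≥ 1. Then a(w) = 0 for every positive integer w with w ≡ 3 (mod 4). -/

import Mathlib

/-- Let `a : ℕ → ℤ` be multiplicative on coprime arguments with `a 1 = 1`, and suppose that for
every prime `p ≡ 3 (mod 4)` one has `a p = 0` and the Hecke recurrence
`a p * a (p^k) = a (p^(k+1)) + p * a (p^(k-1))` for all `k ≥ 1`. Then `a w = 0` for every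
positive integer `w ≡ 3 (mod 4)`. -/
theorem lseries_coeff_three_mod_four (a : ℕ → ℤ) (h1 : a 1 = 1)
    (hmul : ∀ m n : ℕ, Nat.Coprime m n → a (m * n) = a m * a n)
    (hprime : ∀ p : ℕ, p.Prime → p % 4 = 3 →
      a p = 0 ∧ ∀ k : ℕ, 1 ≤ k → a p * a (p ^ k) = a (p ^ (k + 1)) + (p : ℤ) * a (p ^ (k - 1))) :
    ∀ w : ℕ, 0 < w → w % 4 = 3 → a w = 0 := by
  have key : ∀ p : ℕ, p.Prime → p % 4 = 3 → ∀ j : ℕ, a (p ^ (2 * j + 1)) = 0 := by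
    intro p hp hp4 j
    obtain ⟨hap, hrec⟩ := hprime p hp hp4
    induction j with
    | zero => simpa using hap
    | succ j ih =>
      have h := hrec (2 * j + 2) (by omega)
      have hsub : 2 * j + 2 - 1 = 2 * j + 1 := by omega
      rw [hsub, hap] at h
      have h2 : 2 * (j + 1) + 1 = 2 * j + 2 + 1 := by ring
      rw [h2]
      have h3 : a (p ^ (2 * j + 2 + 1)) = - (p : ℤ) * a (p ^ (2 * j + 1)) := by linarith
      rw [h3, ih]; ring
  intro w
  induction w using Nat.strong_induction_on with
  | _ w IH =>
    intro hw hw4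
    have hw2 : w % 2 = 1 := by omega
    obtain ⟨p, hp, hpd⟩ := Nat.exists_prime_and_dvd (show w ≠ 1 by omega)
    have hw0 : w ≠ 0 := by omega
    set e := w.factorization p with he
    set m := w / p ^ e with hm
    have hfac : p ^ e * m = w := Nat.ordProj_mul_ordCompl_eq_self w p
    have hcop : Nat.Coprime (p ^ e) m :=
      Nat.Coprime.pow_left e (Nat.coprime_ordCompl hp hw0)
    have he1 : 1 ≤ e := Nat.Prime.factorization_pos_of_dvd hp hw0 hpd
    have hpe2 : 2 ≤ p ^ e := by
      calc 2 ≤ p := hp.two_le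
      _ = p ^ 1 := (pow_one p).symm
      _ ≤ p ^ e := Nat.pow_le_pow_right hp.one_lt.le he1
    have hm0 : 0 < m := by
      rcases Nat.eq_zero_or_pos m with h | h
      · rw [h, mul_zero] at hfac; omega
      · exact h
    have hmlt : m < w := by
      calc m < p ^ e * m := by nlinarith
      _ = w := hfac
    have hsplit : a w = a (p ^ e) * a m := by rw [← hfac]; exact hmul _ _ hcop
    have hp2 : p % 2 = 1 := by
      rcases hp.eq_two_or_odd with h | h
      · exfalso; subst h; omega
      · exact h
    have hp4 : p % 4 = 1 ∨ p % 4 = 3 := by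
      have := Nat.mod_mod_of_dvd p (show 2 ∣ 4 by norm_num)
      omega
    have step : p ^ e % 4 = 1 → a w = 0 := by
      intro hpe
      have hmm : m % 4 = 3 := by
        have := Nat.mul_mod (p ^ e) m 4
        rw [hfac, hpe] at this
        omega
      rw [hsplit, IH m hmlt hm0 hmm, mul_zero]
    rcases hp4 with h14 | h34
    · apply step
      rw [Nat.pow_mod, h14, one_pow]; rfl
    
    · rcases Nat.even_or_odd e with ⟨j, hj⟩ | ⟨j, hj⟩
      · apply step
        rw [Nat.pow_mod, h34, hj, ← two_mul, pow_mul]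
        norm_num [Nat.pow_mod]
      · rw [hsplit, hj, key p hp h34 j, zero_mul]
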